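/- Let (X,ρ) be a metric space, let P be an abstract porosity on X, and let A ⊆ X be a set that is not σ-P-porous. Then K_P(K_P(A)) = K_P(A); that is, the set K_P(A) is σ-P-porous at none of its points. -/

import Mathlib

open Metric Filter Set

/-- An abstract porosity on a metric space `X`: a relation between points and subsets
of `X` satisfying the axioms (A1), (A2), (A3). -/
structure AbstractPorosity (X : Type*) [MetricSpace X] where
  rel : X → Set X → Prop
  mono : ∀ (x : X) (A B : Set X), A ⊆ B → rel x B → rel x A
  loc : ∀ (x : X) (A : Set X), rel x A ↔ ∃ r > 0, rel x (A ∩ Metric.ball x r)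
  clos : ∀ (x : X) (A : Set X), rel x A ↔ rel x (closure A)

variable {X : Type*} [MetricSpace X]

/-- `A` is `P`-porous if `P(x,A)` holds at each point `x ∈ A`. -/
def AbstractPorosity.Porous (P : AbstractPorosity X) (A : Set X) : Prop :=
  ∀ x ∈ A, P.rel x A

/-- `A` is σ-`P`-porous if it is a countable union of `P`-porous sets. -/
def AbstractPorosity.SigmaPorous (P : AbstractPorosity X) (A : Set X) : Prop :=
  ∃ f : ℕ → Set X, (∀ n, P.Porous (f n)) ∧ A = ⋃ n, f n

/-- `A` is σ-`P`-porous at `x` if some `A ∩ B(x,r)` (r>0) is σ-`P`-porous. -/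
def AbstractPorosity.SigmaPorousAt (P : AbstractPorosity X) (A : Set X) (x : X) : Prop :=
  ∃ r > 0, P.SigmaPorous (A ∩ Metric.ball x r)

/-- The kernel `K_P(A)`: points of `A` at which `A` is not σ-`P`-porous. -/
def AbstractPorosity.kernel (P : AbstractPorosity X) (A : Set X) : Set X :=
  {x ∈ A | ¬ P.SigmaPorousAt A x}

section Auxiliary

variable {X : Type*} [MetricSpace X]

lemma porous_mono (P : AbstractPorosity X) {A B : Set X} (h : A ⊆ B) (hB : P.Porous B) :
    P.Porous A :=
  fun x hx => P.mono x A B h (hB x (h hx))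

lemma sigmaPorous_empty (P : AbstractPorosity X) : P.SigmaPorous (∅ : Set X) :=
  ⟨fun _ => ∅, fun _ x hx => hx.elim, by simp⟩

lemma sigmaPorous_mono (P : AbstractPorosity X) {A B : Set X} (h : A ⊆ B)
    (hB : P.SigmaPorous B) : P.SigmaPorous A := by
  obtain ⟨f, hf, hEq⟩ := hB
  refine ⟨fun n => f n ∩ A, fun n => porous_mono P inter_subset_left (hf n), ?_⟩
  rw [← iUnion_inter, ← hEq, inter_eq_right.mpr h]

lemma iUnion_eq_iUnion_unpair (f : ℕ → ℕ → Set X) :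
    ⋃ n, ⋃ k, f n k = ⋃ m : ℕ, f (Nat.unpair m).1 (Nat.unpair m).2 := by
  ext x
  simp only [mem_iUnion]
  constructor
  · rintro ⟨n, k, hx⟩
    exact ⟨Nat.pair n k, by simpa [Nat.unpair_pair] using hx⟩
  · rintro ⟨m, hx⟩
    exact ⟨_, _, hx⟩

lemma sigmaPorous_iUnion (P : AbstractPorosity X) (f : ℕ → Set X)
    (h : ∀ n, P.SigmaPorous (f n)) : P.SigmaPorous (⋃ n, f n) := by
  choose g hg hge using h
  refine ⟨fun m : ℕ => g (Nat.unpair m).1 (Nat.unpair m).2, fun m => hg _ _, ?_⟩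
  rw [← iUnion_eq_iUnion_unpair]
  exact iUnion_congr hge

lemma sigmaPorous_union (P : AbstractPorosity X) {A B : Set X}
    (hA : P.SigmaPorous A) (hB : P.SigmaPorous B) : P.SigmaPorous (A ∪ B) := by
  have : A ∪ B = ⋃ n : ℕ, (if n = 0 then A else B) := by
    ext x
    simp only [mem_iUnion, mem_union]
    constructor
    · rintro (hx | hx)
      · exact ⟨0, by simpa using hx⟩
      · exact ⟨1, by simpa using hx⟩
    · rintro ⟨n, hx⟩
      by_cases hn : n = 0
      · exact Or.inl (by simpa [hn] using hx)
      · exact Or.inr (by simpa [hn] using hx)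
  rw [this]
  exact sigmaPorous_iUnion P _ (fun n => by by_cases hn : n = 0 <;> simp [hn, hA, hB])

/-- Stone's construction of a σ-uniformly-discrete refinement of the cover `U`. -/
noncomputable def stoneV (U : X → Set X) : ℕ → X → Set X
  | n => fun α =>
    ⋃ c ∈ {c : X | c ∈ U α ∧ (∀ β, c ∈ U β → ¬ WellOrderingRel β α) ∧
        ball c (3 * (1/2 : ℝ) ^ n) ⊆ U α ∧ ∀ j, j < n → ∀ β, c ∉ stoneV U j β},
      ball c ((1/2 : ℝ) ^ n)
  termination_by n => n

lemma mem_stoneV {U : X → Set X} {n : ℕ} {α x : X} :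
    x ∈ stoneV U n α ↔ ∃ c, (c ∈ U α ∧ (∀ β, c ∈ U β → ¬ WellOrderingRel β α) ∧
      ball c (3 * (1/2 : ℝ) ^ n) ⊆ U α ∧ ∀ j, j < n → ∀ β, c ∉ stoneV U j β) ∧
      x ∈ ball c ((1/2 : ℝ) ^ n) := by
  conv_lhs => rw [stoneV]
  simp only [mem_iUnion, mem_setOf_eq, exists_prop]

lemma stoneV_subset {U : X → Set X} {n : ℕ} {α : X} : stoneV U n α ⊆ U α := by
  intro x hx
  obtain ⟨c, ⟨-, -, hball, -⟩, hxc⟩ := mem_stoneV.mp hx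
  have hw : (0:ℝ) ≤ (1/2 : ℝ) ^ n := by positivity
  exact hball (ball_subset_ball (by linarith) hxc)

lemma stoneV_sep {U : X → Set X} {n : ℕ} {α β x y : X} (hne : α ≠ β)
    (hx : x ∈ stoneV U n α) (hy : y ∈ stoneV U n β) : y ∉ ball x ((1/2 : ℝ) ^ n) := by
  intro hxy
  obtain ⟨c, ⟨hcU, hcleast, hcball, -⟩, hxc⟩ := mem_stoneV.mp hx
  obtain ⟨c', ⟨hc'U, hc'least, hc'ball, -⟩, hyc'⟩ := mem_stoneV.mp hy
  rw [mem_ball] at hxc hyc' hxy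
  have htri : dist c c' ≤ dist c x + dist x y + dist y c' := dist_triangle4 c x y c'
  rw [dist_comm c x, dist_comm x y] at htri
  rcases trichotomous_of (@WellOrderingRel X) α β with hlt | heq | hlt
  · -- α before β : c' ∉ U α, but ball c 3w ⊆ U α
    have hc'nU : c' ∉ U α := fun hmem => hc'least α hmem hlt
    have : dist c' c < 3 * (1/2 : ℝ) ^ n := by
      rw [dist_comm]; linarith
    exact hc'nU (hcball (mem_ball.mpr this))
  · exact hne heq
  · have hcnU : c ∉ U β := fun hmem => hcleast β hmem hlt
    have : dist c c' < 3 * (1/2 : ℝ) ^ n := by linarith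
    exact hcnU (hc'ball (mem_ball.mpr this))

lemma stoneV_cover {U : X → Set X} (hopen : ∀ α, IsOpen (U α)) {x : X}
    (hx : ∃ α, x ∈ U α) : ∃ n α, x ∈ stoneV U n α := by
  by_contra hcon
  push_neg at hcon
  have wf : WellFounded (@WellOrderingRel X) := IsWellFounded.wf
  set S : Set X := {α | x ∈ U α} with hS
  have hSne : S.Nonempty := hx
  set α₀ := wf.min S hSne with hα₀
  have hxU : x ∈ U α₀ := wf.min_mem S hSne
  obtain ⟨ε, hε, hball⟩ := Metric.isOpen_iff.mp (hopen α₀) x hxU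
  obtain ⟨n, hn⟩ := exists_pow_lt_of_lt_one (show (0:ℝ) < ε / 3 by linarith)
    (by norm_num : (1/2 : ℝ) < 1)
  refine hcon n α₀ (mem_stoneV.mpr ⟨x, ⟨hxU, ?_, ?_, ?_⟩, mem_ball_self (by positivity)⟩)
  · exact fun β hβ hlt => wf.not_lt_min S hβ hlt
  · exact fun y hy => hball (mem_ball.mpr (lt_of_lt_of_le (mem_ball.mp hy) (by linarith)))
  · exact fun j _ β => hcon j β

/-- Key lemma: if `D` is σ-`P`-porous at each of its points, then `D` is σ-`P`-porous. -/
lemma sigmaPorous_of_sigmaPorousAt (P : AbstractPorosity X) (D : Set X)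
    (h : ∀ x ∈ D, ∃ r > 0, P.SigmaPorous (D ∩ ball x r)) : P.SigmaPorous D := by
  classical
  choose! r hr hsp using h
  set U : X → Set X := fun α => if α ∈ D then ball α (r α) else ∅ with hUdef
  have hopen : ∀ α, IsOpen (U α) := by
    intro α; by_cases hα : α ∈ D <;> simp [hUdef, hα, isOpen_ball]
  have hUsp : ∀ α, P.SigmaPorous (D ∩ U α) := by
    intro α; by_cases hα : α ∈ D
    · simpa [hUdef, hα] using hsp α hα
    · simpa [hUdef, hα] using sigmaPorous_empty P
  choose g hg hgU using hUsp
  set Q : ℕ → ℕ → Set X := fun n k => ⋃ α, (g α k ∩ stoneV U n α) with hQdef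
  have hQporous : ∀ n k, P.Porous (Q n k) := by
    intro n k x hx
    obtain ⟨α, hx1, hx2⟩ := by simpa only [hQdef, mem_iUnion, mem_inter_iff] using hx
    have hrel : P.rel x (g α k) := hg α k x hx1
    refine (P.loc x (Q n k)).mpr ⟨(1/2 : ℝ) ^ n, by positivity, P.mono _ _ _ ?_ hrel⟩
    rintro y ⟨hyQ, hyb⟩
    obtain ⟨β, hy1, hy2⟩ := by simpa only [hQdef, mem_iUnion, mem_inter_iff] using hyQ
    by_cases hβ : β = α
    · exact hβ ▸ hy1
    · exact absurd hyb (stoneV_sep (Ne.symm hβ) hx2 hy2)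
  have hDeq : D = ⋃ n, ⋃ k, Q n k := by
    apply Subset.antisymm
    · intro x hx
      have hxU : ∃ α, x ∈ U α := ⟨x, by simp [hUdef, hx, mem_ball_self (hr x hx)]⟩
      obtain ⟨n, α, hnα⟩ := stoneV_cover hopen hxU
      have hxDU : x ∈ D ∩ U α := ⟨hx, stoneV_subset hnα⟩
      rw [hgU α] at hxDU
      obtain ⟨k, hk⟩ := mem_iUnion.mp hxDU
      exact mem_iUnion.mpr ⟨n, mem_iUnion.mpr ⟨k, mem_iUnion.mpr ⟨α, hk, hnα⟩⟩⟩
    · refine iUnion_subset fun n => iUnion_subset fun k => iUnion_subset fun α => ?_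
      intro y hy
      have : y ∈ D ∩ U α := by rw [hgU α]; exact mem_iUnion.mpr ⟨k, hy.1⟩
      exact this.1
  rw [hDeq]
  exact sigmaPorous_iUnion P _ fun n =>
    ⟨fun k => Q n k, hQporous n, rfl⟩

end Auxiliary

/-- If `A` is not σ-`P`-porous, then `K_P(K_P(A)) = K_P(A)`. -/
theorem kernel_kernel_eq_kernel {X : Type*} [MetricSpace X]
    (P : AbstractPorosity X) (A : Set X) (hA : ¬ P.SigmaPorous A) :
    P.kernel (P.kernel A) = P.kernel A := by
  apply Set.Subset.antisymm
  · exact fun x hx => hx.1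
  · intro x hx
    refine ⟨hx, fun hKat => hx.2 ?_⟩
    obtain ⟨r, hrpos, hKsp⟩ := hKat
    refine ⟨r, hrpos, ?_⟩
    have hD : P.SigmaPorous ((A \ P.kernel A) ∩ ball x r) := by
      apply sigmaPorous_of_sigmaPorousAt
      rintro y ⟨⟨hyA, hyK⟩, -⟩
      have hyat : P.SigmaPorousAt A y := by
        by_contra hc; exact hyK ⟨hyA, hc⟩
      obtain ⟨s, hs, hssp⟩ := hyat
      refine ⟨s, hs, sigmaPorous_mono P ?_ hssp⟩
      rintro z ⟨⟨⟨hzA, -⟩, -⟩, hzb⟩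
      exact ⟨hzA, hzb⟩
    have hsub : A ∩ ball x r ⊆ (P.kernel A ∩ ball x r) ∪ ((A \ P.kernel A) ∩ ball x r) := by
      rintro z ⟨hzA, hzb⟩
      by_cases hzK : z ∈ P.kernel A
      · exact Or.inl ⟨hzK, hzb⟩
      · exact Or.inr ⟨⟨hzA, hzK⟩, hzb⟩
    exact sigmaPorous_mono P hsub (sigmaPorous_union P hKsp hD)
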